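/- If p is a prime congruent to 5 modulo 6 and p divides an integer n, then n has no representation n = a² + a b + b² with a and b relatively prime integers. -/

import Mathlib

/-- If `p` is a prime congruent to `5` modulo `6` and `p` divides `n`, then `n` has no
representation `n = a² + a b + b²` with `a, b` relatively prime integers. -/
theorem stmt_4 (p : ℕ) (hp : p.Prime) (h5 : p % 6 = 5) (n : ℤ) (hdvd : (p : ℤ) ∣ n) :
    ¬ ∃ a b : ℤ, Int.gcd a b = 1 ∧ n = a ^ 2 + a * b + b ^ 2 := by
  rintro ⟨a, b, hg, rfl⟩
  haveI : Fact p.Prime := ⟨hp⟩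
  set x : ZMod p := (a : ZMod p) with hxdef
  set y : ZMod p := (b : ZMod p) with hydef
  have h0 : x ^ 2 + x * y + y ^ 2 = 0 := by
    have := (ZMod.intCast_zmod_eq_zero_iff_dvd _ p).mpr hdvd
    push_cast at this
    exact this
  have hgcd : ¬ ((p : ℤ) ∣ a ∧ (p : ℤ) ∣ b) := by
    rintro ⟨ha, hb⟩
    have h1 : (p : ℤ) ∣ (Int.gcd a b : ℤ) := Int.dvd_coe_gcd ha hb
    rw [hg] at h1
    have := Int.le_of_dvd one_pos h1
    have := hp.two_le
    omega
  by_cases hx : x = 0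
  · have hy : y = 0 := by
      have h2 : y ^ 2 = 0 := by
        rw [hx] at h0; simpa using h0
      exact (pow_eq_zero_iff two_ne_zero).mp h2
    exact hgcd ⟨(ZMod.intCast_zmod_eq_zero_iff_dvd a p).mp hx,
      (ZMod.intCast_zmod_eq_zero_iff_dvd b p).mp hy⟩
  · have hy : y ≠ 0 := by
      intro hy
      apply hx
      have h2 : x ^ 2 = 0 := by rw [hy] at h0; simpa using h0
      exact (pow_eq_zero_iff two_ne_zero).mp h2
    have hcube : x ^ 3 = y ^ 3 := by
      have h3 : x ^ 3 - y ^ 3 = (x - y) * (x ^ 2 + x * y + y ^ 2) := by ring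
      rw [h0, mul_zero, sub_eq_zero] at h3
      exact h3
    obtain ⟨k, hk⟩ : ∃ k, 3 * k = (p - 1) * 2 + 1 := ⟨(p - 1) * 2 / 3 + 1, by omega⟩
    have key : ∀ z : ZMod p, z ≠ 0 → z ^ (3 * k) = z := by
      intro z hz
      rw [hk, pow_add, pow_mul, ZMod.pow_card_sub_one_eq_one hz, one_pow, one_mul, pow_one]
    have hxy : x = y := by
      calc x = x ^ (3 * k) := (key x hx).symm
        _ = (x ^ 3) ^ k := by rw [pow_mul]
        _ = (y ^ 3) ^ k := by rw [hcube]
        _ = y ^ (3 * k) := by rw [pow_mul]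
        _ = y := key y hy
    have h3x : (3 : ZMod p) * x ^ 2 = 0 := by
      rw [hxy] at h0 ⊢; linear_combination h0
    have h3ne : (3 : ZMod p) ≠ 0 := by
      intro h
      have := (ZMod.natCast_eq_zero_iff 3 p).mp (by exact_mod_cast h)
      have := (Nat.le_of_dvd (by norm_num) this)
      interval_cases p <;> omega
    rcases mul_eq_zero.mp h3x with h | h
    · exact h3ne h
    · exact hx ((pow_eq_zero_iff two_ne_zero).mp h)
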